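/- In the dual graph of a simple complete ideal, two vertices ε_i and ε_j with i < j are adjacent (i.e. E_i · E_j ≠ 0) if and only if j = max{ν : ν ≻ i}; in that case E_i · E_j = 1. Consequently, for each i < n there is at most one j > i adjacent to i, namely j = i + w_i − 1 where w_i = −E_i·E_i = 1 + #{ν : ν ≻ i}. -/

import Mathlib

open Matrix

theorem stmt_10 (n : ℕ) (hn : 0 < n) (P : Matrix (Fin n) (Fin n) ℤ)
    (hdiag : ∀ i, P i i = 1)
    (hupper : ∀ i j : Fin n, i < j → P i j = 0)
    (hlower : ∀ i j : Fin n, j < i → P i j = 0 ∨ P i j = -1)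
    (hcol : ∀ j : Fin n, ∃ k : Fin n, ∀ i : Fin n, P i j = -1 ↔ j < i ∧ i ≤ k)
    (hpred : ∀ ν : Fin n, 0 < ν.val →
      P ν ⟨ν.val - 1, Nat.lt_of_le_of_lt (Nat.sub_le _ _) ν.isLt⟩ = -1)
    (hatmost : ∀ ν : Fin n, (Finset.univ.filter (fun j : Fin n => P ν j = -1)).card ≤ 2)
    (N : Matrix (Fin n) (Fin n) ℤ) (hN : N = -(Pᵀ * P)) :
    (∀ i j : Fin n, i < j →
      (N i j ≠ 0 ↔ (P j i = -1 ∧ ∀ ν : Fin n, P ν i = -1 → ν ≤ j))) ∧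
    (∀ i j : Fin n, i < j → N i j ≠ 0 → N i j = 1) ∧
    (∀ i j : Fin n, i < j → N i j ≠ 0 →
      (j : ℕ) = (i : ℕ) + (Finset.univ.filter (fun ν : Fin n => P ν i = -1)).card) := by
  subst hN
  -- the fundamental computation of the entries of N above the diagonal
  have hval : ∀ i j : Fin n, i < j →
      (-(Pᵀ * P)) i j = -(P j i) -
        ((Finset.univ.filter (fun ν : Fin n => P ν i = -1 ∧ P ν j = -1)).card : ℤ) := by
    intro i j hij
    have hsum : (Pᵀ * P) i j = P j i +
        ((Finset.univ.filter (fun ν : Fin n => P ν i = -1 ∧ P ν j = -1)).card : ℤ) := by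
      rw [Matrix.mul_apply]
      have hterm : ∀ ν : Fin n, Pᵀ i ν * P ν j =
          (if ν = j then P j i else 0) + (if P ν i = -1 ∧ P ν j = -1 then (1:ℤ) else 0) := by
        intro ν
        rw [Matrix.transpose_apply]
        rcases lt_trichotomy ν j with h | h | h
        · have h0 : P ν j = 0 := hupper ν j h
          have hne : ¬ (P ν i = -1 ∧ P ν j = -1) := by
            rintro ⟨-, h2⟩; rw [h0] at h2; norm_num at h2
          simp [h0, Fin.ne_of_lt h, hne]
        · subst h
          have hne : ¬ (P ν i = -1 ∧ P ν ν = -1) := by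
            rintro ⟨-, h2⟩; rw [hdiag ν] at h2; norm_num at h2
          simp [hdiag ν, hne]
        · have hi : i < ν := lt_trans hij h
          rcases hlower ν i hi with h1 | h1 <;> rcases hlower ν j h with h2 | h2 <;>
            simp [h1, h2, Fin.ne_of_gt h]
      rw [Finset.sum_congr rfl fun ν _ => hterm ν, Finset.sum_add_distrib,
        Finset.sum_ite_eq' Finset.univ j (fun _ => P j i), Finset.sum_boole]
      simp
    rw [Matrix.neg_apply, hsum]
    ring
  -- N i j = 1 under the adjacency condition
  have hone : ∀ i j : Fin n, i < j → P j i = -1 → (∀ ν : Fin n, P ν i = -1 → ν ≤ j) →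
      (-(Pᵀ * P)) i j = 1 := by
    intro i j hij h1 h2
    have hempty : (Finset.univ.filter (fun ν : Fin n => P ν i = -1 ∧ P ν j = -1)) = ∅ := by
      apply Finset.filter_false_of_mem
      rintro ν - ⟨ha, hb⟩
      obtain ⟨kj, hkj⟩ := hcol j
      have : j < ν := ((hkj ν).mp hb).1
      exact absurd (h2 ν ha) (not_le_of_gt this)
    rw [hval i j hij, h1, hempty]
    simp
  -- N i j = 0 otherwise
  have hzero : ∀ i j : Fin n, i < j → ¬(P j i = -1 ∧ ∀ ν : Fin n, P ν i = -1 → ν ≤ j) →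
      (-(Pᵀ * P)) i j = 0 := by
    intro i j hij h
    obtain ⟨ki, hki⟩ := hcol i
    by_cases h1 : P j i = -1
    · push_neg at h
      obtain ⟨ν₀, hν₀, hjν₀⟩ := h h1
      have hj1 : (j : ℕ) + 1 < n := lt_of_le_of_lt (Nat.succ_le_of_lt hjν₀) ν₀.isLt
      set j1 : Fin n := ⟨(j : ℕ) + 1, hj1⟩ with hj1def
      have hsingle : (Finset.univ.filter (fun ν : Fin n => P ν i = -1 ∧ P ν j = -1)) = {j1} := by
        apply Finset.eq_singleton_iff_unique_mem.mpr
        constructor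
        · rw [Finset.mem_filter]
          refine ⟨Finset.mem_univ _, ?_, ?_⟩
          · apply (hki j1).mpr
            have hjj1 : j < j1 := by rw [Fin.lt_def]; simp [hj1def]
            have hj1ν₀ : j1 ≤ ν₀ := by
              rw [Fin.le_def]; exact Nat.succ_le_of_lt hjν₀
            have hν₀ki : ν₀ ≤ ki := ((hki ν₀).mp hν₀).2
            exact ⟨lt_trans hij hjj1, le_trans hj1ν₀ hν₀ki⟩
          · have := hpred j1 (by simp [hj1def])
            convert this using 2
            ext; simp [hj1def]
        · rintro ν hν
          rw [Finset.mem_filter] at hν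
          obtain ⟨-, hνi, hνj⟩ := hν
          obtain ⟨kj, hkj⟩ := hcol j
          have hjν : j < ν := ((hkj ν).mp hνj).1
          have hge : (j : ℕ) + 1 ≤ (ν : ℕ) := hjν
          rcases eq_or_lt_of_le hge with heq | hlt
          · ext; simp [hj1def, heq]
          · exfalso
            have hνpos : 0 < (ν : ℕ) := Nat.lt_of_le_of_lt (Nat.zero_le _) hlt
            set νp : Fin n := ⟨(ν : ℕ) - 1, Nat.lt_of_le_of_lt (Nat.sub_le _ _) ν.isLt⟩ with hνp
            have hp : P ν νp = -1 := hpred ν hνpos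
            have hij3 : i ≠ j := Fin.ne_of_lt hij
            have hiνp : i ≠ νp := by
              apply Fin.ne_of_lt
              rw [Fin.lt_def]
              simp only [hνp]
              omega
            have hjνp : j ≠ νp := by
              apply Fin.ne_of_lt
              rw [Fin.lt_def]
              simp only [hνp]
              omega
            have hsub : ({i, j, νp} : Finset (Fin n)) ⊆
                Finset.univ.filter (fun c : Fin n => P ν c = -1) := by
              intro x hx
              rw [Finset.mem_filter]
              refine ⟨Finset.mem_univ _, ?_⟩
              simp only [Finset.mem_insert, Finset.mem_singleton] at hx
              rcases hx with rfl | rfl | rfl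
              · exact hνi
              · exact hνj
              · exact hp
            have hcard : ({i, j, νp} : Finset (Fin n)).card = 3 := by
              rw [Finset.card_insert_of_notMem (by simp [hij3, hiνp]),
                Finset.card_insert_of_notMem (by simp [hjνp]), Finset.card_singleton]
            have := le_trans (hcard ▸ Finset.card_le_card hsub) (hatmost ν)
            omega
      rw [hval i j hij, h1, hsingle]
      simp
    · have h0 : P j i = 0 := by
        rcases hlower j i hij with h' | h'
        · exact h'
        · exact absurd h' h1
      have hempty : (Finset.univ.filter (fun ν : Fin n => P ν i = -1 ∧ P ν j = -1)) = ∅ := by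
        apply Finset.filter_false_of_mem
        rintro ν - ⟨ha, hb⟩
        obtain ⟨kj, hkj⟩ := hcol j
        have hjν : j < ν := ((hkj ν).mp hb).1
        have hνki : ν ≤ ki := ((hki ν).mp ha).2
        have : P j i = -1 := (hki j).mpr ⟨hij, le_of_lt (lt_of_lt_of_le hjν hνki)⟩
        exact h1 this
      rw [hval i j hij, h0, hempty]
      simp
  have main : ∀ i j : Fin n, i < j →
      ((-(Pᵀ * P)) i j ≠ 0 ↔ (P j i = -1 ∧ ∀ ν : Fin n, P ν i = -1 → ν ≤ j)) := by
    intro i j hij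
    constructor
    · intro hne
      by_contra hc
      exact hne (hzero i j hij hc)
    · rintro ⟨h1, h2⟩
      rw [hone i j hij h1 h2]
      norm_num
  refine ⟨main, ?_, ?_⟩
  · intro i j hij hne
    obtain ⟨h1, h2⟩ := (main i j hij).mp hne
    exact hone i j hij h1 h2
  · intro i j hij hne
    obtain ⟨h1, h2⟩ := (main i j hij).mp hne
    obtain ⟨ki, hki⟩ := hcol i
    have hkij : ki = j := by
      have hjki : j ≤ ki := ((hki j).mp h1).2
      have hiki : i < ki := lt_of_lt_of_le hij hjki
      have : P ki i = -1 := (hki ki).mpr ⟨hiki, le_refl _⟩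
      exact le_antisymm (h2 ki this) hjki
    have hfe : (Finset.univ.filter (fun ν : Fin n => P ν i = -1)) = Finset.Ioc i j := by
      ext ν
      simp only [Finset.mem_filter, Finset.mem_univ, true_and, Finset.mem_Ioc]
      rw [hki ν, hkij]
    rw [hfe, Fin.card_Ioc]
    omega
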